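/- arXiv:2312.03355 — 3 statements merged into one kernel-verified Lean document; each statement's English description precedes it below -/
import Mathlib

section
/- Let B be a topological space, let V be a finite-dimensional real vector space, and let E be a topological real vector bundle of finite rank over B with total space Tot(E). Let φ : B × V → Tot(E) be a continuous map such that for every b ∈ B, φ(b,·) is a linear map from V onto the fiber E_b (i.e. it lands in E_b, is linear, and is surjective). Then the map φ : B × V → Tot(E) is a fiber bundle: every point e ∈ Tot(E) lying over b₀ ∈ B has an open neighborhood A ⊆ Tot(E) together with a homeomorphism φ⁻¹(A) ≅ A × ker(φ(b₀,·)) commuting with the projections to A. -/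
open Bundle

/-- Let `E` be a topological real vector bundle of finite rank over `B` and let
`φ : B × V → Tot(E)` be a continuous map, where `V` is a finite-dimensional real vector
space, such that each `φ(b,·) : V → E_b` is linear (given by `ψ b`) and surjective.
Then `φ` is a fiber bundle: every `e ∈ Tot(E)`, lying over `b₀ = e.proj`, has an open
neighborhood `A` with a homeomorphism `φ⁻¹(A) ≅ A × ker(φ(b₀,·))` commuting with the
projections to `A`. -/
theorem fiberwise_surjective_linear_isFiberBundle
    {B : Type} [TopologicalSpace B]
    (V : Type) [NormedAddCommGroup V] [NormedSpace ℝ V] [FiniteDimensional ℝ V]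
    (F : Type) [NormedAddCommGroup F] [NormedSpace ℝ F] [FiniteDimensional ℝ F]
    (E : B → Type) [∀ b, AddCommGroup (E b)] [∀ b, Module ℝ (E b)]
    [∀ b, TopologicalSpace (E b)] [TopologicalSpace (TotalSpace F E)]
    [FiberBundle F E] [VectorBundle ℝ F E]
    (φ : B × V → TotalSpace F E) (hφcont : Continuous φ)
    (ψ : ∀ b, V →ₗ[ℝ] E b)
    (hφψ : ∀ b v, φ (b, v) = TotalSpace.mk b (ψ b v))
    (hsurj : ∀ b, Function.Surjective (ψ b)) :
    ∀ e : TotalSpace F E,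
      ∃ A : Set (TotalSpace F E), IsOpen A ∧ e ∈ A ∧
        ∃ h : (φ ⁻¹' A) ≃ₜ A × (LinearMap.ker (ψ e.proj)),
          ∀ z : φ ⁻¹' A, ((h z).1 : TotalSpace F E) = φ z := by
  intro e
  classical
  haveI : CompleteSpace F := FiniteDimensional.complete ℝ F
  set b₀ := e.proj with hb₀
  set t := trivializationAt F E b₀ with ht
  have hb₀U : b₀ ∈ t.baseSet := FiberBundle.mem_baseSet_trivializationAt' b₀
  set K := LinearMap.ker (ψ b₀) with hK
  obtain ⟨W, hKW⟩ := Submodule.exists_isCompl K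
  -- the fiberwise maps in the trivialization coordinates
  let ψ' : ∀ b, b ∈ t.baseSet → (V →L[ℝ] F) := fun b hb =>
    LinearMap.toContinuousLinearMap
      (((t.continuousLinearEquivAt ℝ b hb).toLinearMap).comp (ψ b))
  have hψ'eval : ∀ b (hb : b ∈ t.baseSet) v, ψ' b hb v = (t (φ (b, v))).2 := by
    intro b hb v
    simp only [ψ', LinearMap.coe_toContinuousLinearMap', LinearMap.coe_comp,
      Function.comp_apply, ContinuousLinearEquiv.coe_coe, hφψ,
      Trivialization.continuousLinearEquivAt_apply, ContinuousLinearEquiv.coe_toLinearEquiv]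
    exact congrFun (Trivialization.continuousLinearEquivAt_apply ℝ t b hb) _
  have hψ'apply : ∀ b (hb : b ∈ t.baseSet) v,
      ψ' b hb v = (t.continuousLinearEquivAt ℝ b hb) (ψ b v) := by
    intro b hb v
    simp [ψ', LinearMap.coe_toContinuousLinearMap', ContinuousLinearEquiv.coe_toLinearEquiv]
  have hψ'ker : LinearMap.ker ((ψ' b₀ hb₀U) : V →ₗ[ℝ] F) = K := by
    ext x
    rw [LinearMap.mem_ker, ContinuousLinearMap.coe_coe, hK, LinearMap.mem_ker, hψ'apply b₀ hb₀U x,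
      ContinuousLinearEquiv.map_eq_zero_iff]
  have hψ'surj : Function.Surjective (ψ' b₀ hb₀U) := by
    simp only [ψ', LinearMap.coe_toContinuousLinearMap', LinearMap.coe_comp,
      ContinuousLinearEquiv.coe_coe]
    exact (t.continuousLinearEquivAt ℝ b₀ hb₀U).surjective.comp (hsurj b₀)
  -- dimension count : finrank W = finrank F
  have hdim : Module.finrank ℝ F = Module.finrank ℝ W := by
    have h1 := LinearMap.finrank_range_add_finrank_ker ((ψ' b₀ hb₀U) : V →ₗ[ℝ] F)
    have h2 := Submodule.finrank_add_eq_of_isCompl hKW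
    have hr : LinearMap.range ((ψ' b₀ hb₀U) : V →ₗ[ℝ] F) = ⊤ :=
      LinearMap.range_eq_top.2 hψ'surj
    rw [hr] at h1
    have hker : LinearMap.ker ((ψ' b₀ hb₀U) : V →ₗ[ℝ] F) = K := hψ'ker
    rw [hker] at h1
    rw [finrank_top] at h1
    omega
  obtain ⟨j₀⟩ := FiniteDimensional.nonempty_linearEquiv_of_finrank_eq hdim
  let j : F ≃L[ℝ] W := j₀.toContinuousLinearEquiv
  let ι : W →L[ℝ] V := W.subtypeL
  -- the family of endomorphisms of F
  let M : B → (F →L[ℝ] F) := fun b =>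
    if hb : b ∈ t.baseSet then (ψ' b hb).comp (ι.comp (j : F →L[ℝ] W)) else 0
  have hMeval : ∀ b (hb : b ∈ t.baseSet) (w : F), M b w = ψ' b hb (ι (j w)) := by
    intro b hb w
    simp only [M, dif_pos hb, ContinuousLinearMap.comp_apply,
      ContinuousLinearEquiv.coe_coe]
  have hMcont : ContinuousOn M t.baseSet := by
    rw [continuousOn_iff_continuous_restrict, continuous_clm_apply]
    intro w
    have key : ∀ b : t.baseSet, M b w = (t (φ (b, ι (j w)))).2 := fun b => by
      rw [hMeval b b.2 w, hψ'eval b b.2]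
    refine (continuous_congr key).mpr ?_
    apply Continuous.snd
    apply t.continuousOn.comp_continuous
    · exact hφcont.comp ((continuous_subtype_val).prodMk continuous_const)
    · intro b
      rw [Trivialization.mem_source, hφψ]
      exact b.2
  -- the open set of good base points
  set U' : Set B := t.baseSet ∩ M ⁻¹' {x | IsUnit x} with hU'
  have hU'open : IsOpen U' :=
    hMcont.isOpen_inter_preimage t.open_baseSet Units.isOpen
  have hMb₀ : IsUnit (M b₀) := by
    have hinj : Function.Injective (M b₀) := by
      intro x y hxy
      have : ι (j x) - ι (j y) ∈ K := by
        rw [← hψ'ker]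
        simp only [LinearMap.mem_ker]
        rw [hMeval b₀ hb₀U x, hMeval b₀ hb₀U y] at hxy
        simp [map_sub, hxy]
      have hw : ι (j x) - ι (j y) ∈ W := by
        have : (j x : V) - (j y : V) = ((j x - j y : W) : V) := by push_cast; ring
        simp only [ι, Submodule.coe_subtypeL', Submodule.coe_subtype, this]
        exact (j x - j y).2
      have h0 : ι (j x) - ι (j y) = 0 := by
        have := hKW.1
        have := Submodule.disjoint_def.1 hKW.1 _ ‹ι (j x) - ι (j y) ∈ K› hw
        exact this
      have : j x = j y := by
        apply Subtype.ext
        have : (j x : V) = (j y : V) := by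
          have := sub_eq_zero.1 h0
          simpa [ι] using this
        exact this
      exact j.injective this
    have hbij : Function.Bijective ((M b₀) : F →ₗ[ℝ] F) :=
      ⟨hinj, LinearMap.injective_iff_surjective.1 hinj⟩
    let g := LinearEquiv.ofBijective ((M b₀) : F →ₗ[ℝ] F) hbij
    let ginv : F →L[ℝ] F := LinearMap.toContinuousLinearMap (g.symm : F →ₗ[ℝ] F)
    refine ⟨⟨M b₀, ginv, ?_, ?_⟩, rfl⟩
    · ext x
      simp only [ContinuousLinearMap.mul_apply, ContinuousLinearMap.one_apply, ginv,
        LinearMap.coe_toContinuousLinearMap']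
      exact g.apply_symm_apply x
    · ext x
      simp only [ContinuousLinearMap.mul_apply, ContinuousLinearMap.one_apply, ginv,
        LinearMap.coe_toContinuousLinearMap']
      exact g.symm_apply_apply x
  have hb₀U' : b₀ ∈ U' := ⟨hb₀U, hMb₀⟩
  -- the open neighborhood A
  set A : Set (TotalSpace F E) := TotalSpace.proj ⁻¹' U' with hA
  have hAopen : IsOpen A := hU'open.preimage (FiberBundle.continuous_proj F E)
  have heA : e ∈ A := hb₀U'
  have hAsource : ∀ a ∈ A, a ∈ t.source := fun a ha => t.mem_source.2 ha.1
  have hmemA : ∀ b v, φ (b, v) ∈ A ↔ b ∈ U' := by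
    intro b v
    rw [hA, Set.mem_preimage, hφψ]
  have hta : ∀ (a : TotalSpace F E) (ha : a ∈ A),
      (t.continuousLinearEquivAt ℝ a.proj ha.1) a.2 = (t a).2 := by
    intro a ha
    exact congrFun (Trivialization.continuousLinearEquivAt_apply ℝ t a.proj ha.1) a.2
  -- the projection onto K
  let projK : V →L[ℝ] K := LinearMap.toContinuousLinearMap (K.linearProjOfIsCompl W hKW)
  have hprojK : ∀ v, projK v = K.linearProjOfIsCompl W hKW v := fun v => by
    simp [projK, LinearMap.coe_toContinuousLinearMap']
  have hpK : ∀ (k : K), projK (k : V) = k := fun k => by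
    rw [hprojK]; exact Submodule.linearProjOfIsCompl_apply_left hKW k
  have hpW : ∀ w, w ∈ W → projK w = 0 := fun w hw => by
    rw [hprojK]; exact Submodule.linearProjOfIsCompl_apply_right hKW ⟨w, hw⟩
  have hsub : ∀ v : V, v - ((projK v : K) : V) ∈ W := by
    intro v
    rw [← Submodule.linearProjOfIsCompl_ker hKW, LinearMap.mem_ker, map_sub,
      Submodule.projectionOnto_apply_left hKW (projK v), hprojK]
    exact sub_self _
  -- the section family
  let σ : B → F → V := fun b y => ι (j (Ring.inverse (M b) y))
  have hσ1 : ∀ b (hbu : b ∈ U') (y : F), ψ' b hbu.1 (σ b y) = y := by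
    intro b hbu y
    have h1 := hMeval b hbu.1 (Ring.inverse (M b) y)
    rw [show σ b y = ι (j (Ring.inverse (M b) y)) from rfl, ← h1]
    calc M b (Ring.inverse (M b) y) = (M b * Ring.inverse (M b)) y :=
          (ContinuousLinearMap.mul_apply _ _ _).symm
      _ = y := by rw [Ring.mul_inverse_cancel _ hbu.2]; rfl
  have hσW : ∀ b y, σ b y ∈ W := fun b y => (j (Ring.inverse (M b) y)).2
  have hσ2 : ∀ b (hbu : b ∈ U') (w : V), w ∈ W → σ b (ψ' b hbu.1 w) = w := by
    intro b hbu w hw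
    set x := j.symm ⟨w, hw⟩ with hx
    have hjx : (ι (j x) : V) = w := by simp [ι, hx]
    have h1 : ψ' b hbu.1 w = M b x := by rw [← hjx, hMeval b hbu.1]
    rw [h1]
    show ι (j (Ring.inverse (M b) (M b x))) = w
    have h2 : Ring.inverse (M b) (M b x) = x := by
      calc Ring.inverse (M b) (M b x) = (Ring.inverse (M b) * M b) x :=
            (ContinuousLinearMap.mul_apply _ _ _).symm
        _ = x := by rw [Ring.inverse_mul_cancel _ hbu.2]; rfl
    rw [h2, hjx]
  refine ⟨A, hAopen, heA, ?_⟩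
  -- the homeomorphism
  let h : (φ ⁻¹' A) ≃ₜ A × K :=
    { toFun := fun z => (⟨φ z, z.2⟩, projK (z : B × V).2)
      invFun := fun p =>
        ⟨(p.1.val.proj,
            σ p.1.val.proj ((t p.1.val).2 - (t (φ (p.1.val.proj, (p.2 : V)))).2) + (p.2 : V)),
          (hmemA _ _).2 p.1.2⟩
      left_inv := by
        rintro ⟨⟨b, v⟩, hz⟩
        have hbu : b ∈ U' := (hmemA b v).1 hz
        have hb : b ∈ t.baseSet := hbu.1
        apply Subtype.ext
        have hproj : (φ (b, v)).proj = b := by rw [hφψ]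
        refine Prod.ext hproj ?_
        show σ (φ (b, v)).proj
            ((t (φ (b, v))).2 - (t (φ ((φ (b, v)).proj, ((projK v : K) : V)))).2)
            + ((projK v : K) : V) = v
        rw [hproj, ← hψ'eval b hb v, ← hψ'eval b hb ((projK v : K) : V), ← map_sub,
          hσ2 b hbu _ (hsub v), sub_add_cancel]
      right_inv := by
        rintro ⟨⟨a, ha⟩, k⟩
        have hbu : a.proj ∈ U' := ha
        have hb : a.proj ∈ t.baseSet := hbu.1
        set v : V := σ a.proj ((t a).2 - (t (φ (a.proj, (k : V)))).2) + (k : V) with hv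
        refine Prod.ext (Subtype.ext ?_) ?_
        · show φ (a.proj, v) = a
          rw [hφψ]
          have hfib : ψ a.proj v = a.2 := by
            apply (t.continuousLinearEquivAt ℝ a.proj hb).injective
            have h1 : (t.continuousLinearEquivAt ℝ a.proj hb) (ψ a.proj v)
                = ψ' a.proj hb v := (hψ'apply a.proj hb v).symm
            rw [h1, hv, map_add, hσ1 a.proj hbu, hψ'eval a.proj hb ((k : V)),
              sub_add_cancel, hta a ha]
          exact congrArg (TotalSpace.mk a.proj) hfib
        · show projK v = k
          rw [hv, map_add, hpW _ (hσW _ _), hpK, zero_add]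
      continuous_toFun := by
        apply Continuous.prodMk
        · exact Continuous.subtype_mk (hφcont.comp continuous_subtype_val) _
        · exact projK.continuous.comp (continuous_snd.comp continuous_subtype_val)
      continuous_invFun := by
        have hf1 : Continuous fun p : A × K => p.1.val.proj :=
          (FiberBundle.continuous_proj F E).comp (continuous_subtype_val.comp continuous_fst)
        have hf1U : ∀ p : A × K, p.1.val.proj ∈ U' := fun p => p.1.2
        have hk : Continuous fun p : A × K => (p.2 : V) :=
          continuous_subtype_val.comp continuous_snd
        have hy : Continuous fun p : A × K => (t p.1.val).2 := by
          apply Continuous.snd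
          exact t.continuousOn.comp_continuous
            (continuous_subtype_val.comp continuous_fst) (fun p => hAsource _ p.1.2)
        have hc : Continuous fun p : A × K => (t (φ (p.1.val.proj, (p.2 : V)))).2 := by
          apply Continuous.snd
          apply t.continuousOn.comp_continuous (hφcont.comp (hf1.prodMk hk))
          intro p
          simp only [Function.comp_apply]
          rw [Trivialization.mem_source, hφψ]
          exact (hf1U p).1
        have hMinv : Continuous fun p : A × K => Ring.inverse (M p.1.val.proj) := by
          have hM1 : Continuous fun p : A × K => M p.1.val.proj :=
            hMcont.comp_continuous hf1 (fun p => (hf1U p).1)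
          rw [continuous_iff_continuousAt]
          intro p
          obtain ⟨u, hu⟩ := (hf1U p).2
          exact ContinuousAt.comp (hu ▸ NormedRing.inverse_continuousAt u) hM1.continuousAt
        have hX : Continuous fun p : A × K =>
            (t p.1.val).2 - (t (φ (p.1.val.proj, (p.2 : V)))).2 := hy.sub hc
        have happ : Continuous fun p : A × K =>
            Ring.inverse (M p.1.val.proj)
              ((t p.1.val).2 - (t (φ (p.1.val.proj, (p.2 : V)))).2) :=
          isBoundedBilinearMap_apply.continuous.comp (hMinv.prodMk hX)
        have hσc : Continuous fun p : A × K =>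
            σ p.1.val.proj ((t p.1.val).2 - (t (φ (p.1.val.proj, (p.2 : V)))).2) :=
          ι.continuous.comp ((j : F →L[ℝ] W).continuous.comp happ)
        exact Continuous.subtype_mk (hf1.prodMk (hσc.add hk)) _ }
  exact ⟨h, fun z => rfl⟩
end

section
/- Let E → B be a topological real vector bundle of finite rank over a compact topological space B, and let {s_j}_{j ∈ J} be a set of continuous sections of E such that for every b ∈ B the vectors {s_j(b)}_{j ∈ J} span the fiber E_b as a real vector space. Then there is a finite subset J₀ ⊆ J such that for every b ∈ B the vectors {s_j(b)}_{j ∈ J₀} already span E_b. -/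
open Bundle

private lemma span_equiv_top_iff' {M N : Type*} [AddCommGroup M] [Module ℝ M]
    [AddCommGroup N] [Module ℝ N] (ψ : M ≃ₗ[ℝ] N) {ι : Type*} (f : ι → M) :
    Submodule.span ℝ (Set.range fun i => ψ (f i)) = ⊤ ↔
      Submodule.span ℝ (Set.range f) = ⊤ := by
  have h : (Set.range fun i => ψ (f i)) = ψ '' Set.range f := by
    rw [← Set.range_comp]; rfl
  have hmap : Submodule.span ℝ (ψ '' Set.range f)
      = Submodule.orderIsoMapComap ψ (Submodule.span ℝ (Set.range f)) := by
    exact (Submodule.map_span (ψ : M →ₗ[ℝ] N) _).symm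
  rw [h, hmap, show (⊤ : Submodule ℝ N) = Submodule.orderIsoMapComap ψ ⊤ from
    (OrderIso.map_top _).symm]
  exact (Submodule.orderIsoMapComap ψ).injective.eq_iff

/-- Let `E` be a topological real vector bundle of finite rank over a compact space `B`,
and let `(s_j)_{j ∈ J}` be continuous sections such that for every `b ∈ B` the vectors
`s_j(b)` span the fiber `E_b`.  Then some finite subfamily already spans every fiber. -/
theorem exists_finite_spanning_subfamily_of_sections
    {B : Type} [TopologicalSpace B] [CompactSpace B]
    (F : Type) [NormedAddCommGroup F] [NormedSpace ℝ F] [FiniteDimensional ℝ F]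
    (E : B → Type) [∀ b, AddCommGroup (E b)] [∀ b, Module ℝ (E b)]
    [∀ b, TopologicalSpace (E b)] [TopologicalSpace (TotalSpace F E)]
    [FiberBundle F E] [VectorBundle ℝ F E]
    (J : Type) (s : J → ∀ b, E b)
    (hscont : ∀ j, Continuous fun b => (TotalSpace.mk b (s j b) : TotalSpace F E))
    (hspan : ∀ b : B, Submodule.span ℝ (Set.range fun j => s j b) = ⊤) :
    ∃ J₀ : Finset J, ∀ b : B,
      Submodule.span ℝ (Set.range fun j : J₀ => s j.1 b) = ⊤ := by
  classical
  have key : ∀ b : B, ∃ (t : Finset J) (U : Set B), IsOpen U ∧ b ∈ U ∧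
      ∀ b' ∈ U, Submodule.span ℝ (Set.range fun j : t => s j.1 b') = ⊤ := by
    intro b
    set e := trivializationAt F E b with he
    have hb : b ∈ e.baseSet := FiberBundle.mem_baseSet_trivializationAt F E b
    set n := Module.finrank ℝ F with hn
    let β : Module.Basis (Fin n) ℝ F := Module.finBasis ℝ F
    let φ := e.continuousLinearEquivAt ℝ b hb
    have hF : Submodule.span ℝ (Set.range fun j => φ (s j b)) = ⊤ :=
      (span_equiv_top_iff' φ.toLinearEquiv _).2 (hspan b)
    obtain ⟨c, hcsub, hcspan, hcind⟩ :=
      exists_linearIndependent ℝ (Set.range fun j => φ (s j b))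
    rw [hF] at hcspan
    have hcfin : c.Finite := hcind.setFinite
    haveI : Fintype c := hcfin.fintype
    let bc : Module.Basis c ℝ F := Module.Basis.mk hcind (by rw [Subtype.range_coe, hcspan])
    have hcard : Fintype.card c = n := (Module.finrank_eq_card_basis bc).symm
    let σ : Fin n ≃ c := (Fintype.equivFinOfCardEq hcard).symm
    have hw : ∀ x : c, ∃ j : J, φ (s j b) = x := fun x => hcsub x.2
    choose w hwspec using hw
    let v : B → Fin n → F := fun b' i => (e (TotalSpace.mk b' (s (w (σ i)) b'))).2
    have hvb : ∀ i, v b i = (σ i : F) := by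
      intro i
      have h1 : (e ⟨b, s (w (σ i)) b⟩ : B × F) = (b, φ (s (w (σ i)) b)) :=
        e.apply_eq_prod_continuousLinearEquivAt ℝ b hb _
      rw [show v b i = (e ⟨b, s (w (σ i)) b⟩).2 from rfl, h1, hwspec]
    have hdet : β.det (v b) ≠ 0 := by
      have hb1 : LinearIndependent ℝ (v b) := by
        rw [funext hvb]
        exact hcind.comp σ σ.injective
      have hb2 : Submodule.span ℝ (Set.range (v b)) = ⊤ := by
        have hr : Set.range (v b) = c := by
          rw [funext hvb, show (fun i => (σ i : F)) = Subtype.val ∘ σ from rfl,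
            Set.range_comp, Equiv.range_eq_univ, Set.image_univ, Subtype.range_coe]
        rw [hr, hcspan]
      exact fun h0 => (isUnit_iff_ne_zero.1 ((Module.Basis.is_basis_iff_det β).1 ⟨hb1, hb2⟩)) h0
    have hvcont : ∀ i, ContinuousOn (fun b' => v b' i) e.baseSet := by
      intro i
      have h1 : ContinuousOn (fun b' => e (TotalSpace.mk b' (s (w (σ i)) b'))) e.baseSet := by
        apply e.continuousOn.comp (hscont (w (σ i))).continuousOn
        intro b' hb'
        rw [Trivialization.mem_source]; exact hb'
      exact continuous_snd.comp_continuousOn h1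
    have hdcont : ContinuousOn (fun b' => β.det (v b')) e.baseSet := by
      have hM : ContinuousOn (fun b' => β.toMatrix (v b')) e.baseSet := by
        apply continuousOn_pi.2
        intro i
        rw [continuousOn_pi]
        intro k
        have h1 : ContinuousOn (fun b' => β.equivFun (v b' k)) e.baseSet :=
          (β.equivFun.toLinearMap.continuous_of_finiteDimensional).comp_continuousOn (hvcont k)
        have h2 : ContinuousOn (fun b' => β.equivFun (v b' k) i) e.baseSet :=
          (continuous_apply i).comp_continuousOn h1
        apply h2.congr
        intro x _
        show β.toMatrix (v x) i k = β.equivFun (v x k) i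
        rw [Module.Basis.toMatrix_apply, Module.Basis.equivFun_apply]
      have hc2 := (continuous_id.matrix_det).comp_continuousOn hM
      apply hc2.congr
      intro x _
      show β.det (v x) = (id (β.toMatrix (v x))).det
      rw [Module.Basis.det_apply]
      rfl
    refine ⟨Finset.image (fun i => w (σ i)) Finset.univ,
      e.baseSet ∩ (fun b' => β.det (v b')) ⁻¹' {(0:ℝ)}ᶜ,
      hdcont.isOpen_inter_preimage e.open_baseSet isOpen_compl_singleton,
      ⟨hb, hdet⟩, ?_⟩
    rintro b' ⟨hb', hdb'⟩
    have hbasis := (Module.Basis.is_basis_iff_det β).2 (isUnit_iff_ne_zero.2 hdb')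
    let φ' := e.continuousLinearEquivAt ℝ b' hb'
    have hv' : ∀ i, v b' i = φ' (s (w (σ i)) b') := by
      intro i
      rw [show v b' i = (e ⟨b', s (w (σ i)) b'⟩).2 from rfl,
        e.apply_eq_prod_continuousLinearEquivAt ℝ b' hb']
    have hspan' : Submodule.span ℝ (Set.range fun i => φ' (s (w (σ i)) b')) = ⊤ := by
      rw [← funext hv']; exact hbasis.2
    have h2 : Submodule.span ℝ (Set.range fun i : Fin n => s (w (σ i)) b') = ⊤ :=
      (span_equiv_top_iff' φ'.toLinearEquiv _).1 hspan'
    have hsub : (Set.range fun i : Fin n => s (w (σ i)) b')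
        ⊆ Set.range fun j : (Finset.image (fun i => w (σ i)) Finset.univ : Finset J)
          => s j.1 b' := by
      rintro _ ⟨i, rfl⟩
      exact ⟨⟨w (σ i), Finset.mem_image_of_mem _ (Finset.mem_univ i)⟩, rfl⟩
    exact top_unique (h2 ▸ Submodule.span_mono hsub)
  choose t U hUopen hbU hU using key
  obtain ⟨c, hc⟩ := isCompact_univ.elim_finite_subcover U hUopen
    (fun b _ => Set.mem_iUnion.2 ⟨b, hbU b⟩)
  refine ⟨c.biUnion t, fun b => ?_⟩
  obtain ⟨i, hic, hbi⟩ := Set.mem_iUnion₂.1 (hc (Set.mem_univ b))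
  have hsub : (Set.range fun j : (t i : Finset J) => s j.1 b)
      ⊆ Set.range fun j : (c.biUnion t : Finset J) => s j.1 b := by
    rintro _ ⟨⟨j, hj⟩, rfl⟩
    exact ⟨⟨j, Finset.mem_biUnion.2 ⟨i, hic, hj⟩⟩, rfl⟩
  exact top_unique ((hU i b hbi) ▸ Submodule.span_mono hsub)
end

section
/- Let E → B be a topological real vector bundle of finite rank over a compact Hausdorff space B, and let s₁, …, s_m be continuous sections of E such that for every b ∈ B the vectors s₁(b), …, s_m(b) span the fiber E_b as a real vector space. Then every continuous section σ of E can be written as σ = f₁·s₁ + … + f_m·s_m for some continuous functions f₁, …, f_m ∈ C(B, ℝ). -/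
open Bundle Matrix

theorem local_coeffs_aux
    {B : Type} [TopologicalSpace B]
    (F : Type) [NormedAddCommGroup F] [NormedSpace ℝ F] [FiniteDimensional ℝ F]
    (E : B → Type) [∀ b, AddCommGroup (E b)] [∀ b, Module ℝ (E b)]
    [∀ b, TopologicalSpace (E b)] [TopologicalSpace (TotalSpace F E)]
    [FiberBundle F E] [VectorBundle ℝ F E]
    (m : ℕ) (s : Fin m → ∀ b, E b)
    (hscont : ∀ i, Continuous fun b => (TotalSpace.mk b (s i b) : TotalSpace F E))
    (σ : ∀ b, E b)
    (hσcont : Continuous fun b => (TotalSpace.mk b (σ b) : TotalSpace F E))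
    (x : B) (hspanx : Submodule.span ℝ (Set.range fun i => s i x) = ⊤) :
    ∃ W : Set B, IsOpen W ∧ x ∈ W ∧ ∃ g : Fin m → B → ℝ,
      (∀ i, ContinuousOn (g i) W) ∧ ∀ b ∈ W, σ b = ∑ i, g i b • s i b := by
  classical
  set e := trivializationAt F E x with he
  have hx : x ∈ e.baseSet := mem_baseSet_trivializationAt F E x
  -- push everything into the model fiber F via the trivialization
  obtain ⟨v, hvcont, keyv⟩ : ∃ v : Fin m → B → F, (∀ i, ContinuousOn (v i) e.baseSet) ∧
      ∀ (b) (hb : b ∈ e.baseSet) (i), e.continuousLinearEquivAt ℝ b hb (s i b) = v i b := by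
    refine ⟨fun i b => (e ⟨b, s i b⟩).2, fun i => ?_,
      fun b hb i => congrFun (e.continuousLinearEquivAt_apply ℝ b hb) (s i b)⟩
    have h1 : ContinuousOn (fun b => e ⟨b, s i b⟩) e.baseSet :=
      e.continuousOn.comp (hscont i).continuousOn fun b hb => e.mem_source.2 hb
    exact continuous_snd.comp_continuousOn h1
  obtain ⟨σ', hσ'cont, keyσ⟩ : ∃ σ' : B → F, ContinuousOn σ' e.baseSet ∧
      ∀ (b) (hb : b ∈ e.baseSet), e.continuousLinearEquivAt ℝ b hb (σ b) = σ' b := by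
    refine ⟨fun b => (e ⟨b, σ b⟩).2, ?_,
      fun b hb => congrFun (e.continuousLinearEquivAt_apply ℝ b hb) (σ b)⟩
    have h1 : ContinuousOn (fun b => e ⟨b, σ b⟩) e.baseSet :=
      e.continuousOn.comp hσcont.continuousOn fun b hb => e.mem_source.2 hb
    exact continuous_snd.comp_continuousOn h1
  have hspan' : Submodule.span ℝ (Set.range fun i => v i x) = ⊤ := by
    have himg : (Set.range fun i => v i x)
        = ((e.continuousLinearEquivAt ℝ x hx : E x →ₗ[ℝ] F) : E x → F) ''
            (Set.range fun i => s i x) := by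
      rw [← Set.range_comp]
      refine congrArg Set.range ?_
      funext i
      exact (keyv x hx i).symm
    rw [himg, ← Submodule.map_span, hspanx, Submodule.map_top, LinearMap.range_eq_top]
    exact (e.continuousLinearEquivAt ℝ x hx).surjective
  -- a linear right inverse of the coefficient map at the point x
  obtain ⟨g, hg⟩ :=
    (Fintype.linearCombination ℝ (fun i => v i x)).exists_rightInverse_of_surjective
      (by rw [Fintype.range_linearCombination, hspan'])
  set n := Module.finrank ℝ F with hn
  set β : Module.Basis (Fin n) ℝ F := Module.finBasis ℝ F with hβ
  -- the family of endomorphisms of F and their matrices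
  obtain ⟨A, hAapp⟩ : ∃ A : B → (F →ₗ[ℝ] F), ∀ b w, A b w = ∑ i, g w i • v i b :=
    ⟨fun b => (Fintype.linearCombination ℝ (fun i => v i b)).comp g,
      fun b w => by simp [Fintype.linearCombination_apply]⟩
  have hAx : A x = LinearMap.id := by
    ext w
    have h := LinearMap.ext_iff.1 hg w
    simpa [Fintype.linearCombination_apply, hAapp] using h
  obtain ⟨M, hMmul, hMentry⟩ : ∃ M : B → Matrix (Fin n) (Fin n) ℝ,
      (∀ b w, (M b) *ᵥ (β.equivFun w) = β.equivFun (A b w)) ∧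
      (∀ b, M b = LinearMap.toMatrix β β (A b)) := by
    refine ⟨fun b => LinearMap.toMatrix β β (A b), fun b w => ?_, fun b => rfl⟩
    have h4 : LinearMap.toMatrix β β (A b) *ᵥ ⇑(β.repr w) = ⇑(β.repr (A b w)) :=
      LinearMap.toMatrix_mulVec_repr β β (A b) w
    have h6 : ∀ z : F, β.equivFun z = ⇑(β.repr z) := fun z => β.equivFun_apply z
    rw [h6, h6, h4]
  have hMx : M x = 1 := by rw [hMentry, hAx, LinearMap.toMatrix_id]
  have hMcont : ContinuousOn M e.baseSet := by
    refine continuousOn_pi.2 ?_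
    intro k
    rw [continuousOn_pi]
    intro l
    have hAl : ContinuousOn (fun b => A b (β l)) e.baseSet := by
      have h2 : (fun b => A b (β l)) = fun b => ∑ i, g (β l) i • v i b := by
        funext b; exact hAapp b (β l)
      rw [h2]
      exact continuousOn_finset_sum _ fun i _ => (hvcont i).const_smul _
    have hcoord : Continuous (β.coord k) := (β.coord k).continuous_of_finiteDimensional
    have h3 : (fun b => M b k l) = fun b => β.coord k (A b (β l)) := by
      funext b
      rw [hMentry]
      simp [LinearMap.toMatrix_apply, Module.Basis.coord_apply]
    rw [h3]
    exact hcoord.comp_continuousOn hAl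
  clear hMentry hAx hg he hβ hn hspan' hvcont
  clear_value β n
  have hdetcont : ContinuousOn (fun b => (M b).det) e.baseSet :=
    (continuous_id.matrix_det).comp_continuousOn hMcont
  set W : Set B := e.baseSet ∩ (fun b => (M b).det) ⁻¹' {(0 : ℝ)}ᶜ with hW
  have hWsub : W ⊆ e.baseSet := Set.inter_subset_left
  have hWopen : IsOpen W := hdetcont.isOpen_inter_preimage e.open_baseSet isOpen_compl_singleton
  have hxW : x ∈ W := by
    refine ⟨hx, ?_⟩
    simp [hMx]
  have hdetW : ∀ b ∈ W, (M b).det ≠ 0 := fun b hb => hb.2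
  set y : B → (Fin n → ℝ) :=
    fun b => ((M b).det)⁻¹ • ((M b).adjugate *ᵥ (β.equivFun (σ' b))) with hy
  set c : Fin m → B → ℝ := fun i b => g (β.equivFun.symm (y b)) i with hc
  have hycont : ContinuousOn y W := by
    have hσ'W : ContinuousOn (fun b => β.equivFun (σ' b)) W := by
      have hef : Continuous (β.equivFun : F →ₗ[ℝ] (Fin n → ℝ)) :=
        LinearMap.continuous_of_finiteDimensional _
      exact hef.comp_continuousOn (hσ'cont.mono hWsub)
    have hadj : ContinuousOn (fun b => (M b).adjugate) W :=
      (continuous_id.matrix_adjugate).comp_continuousOn (hMcont.mono hWsub)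
    have hmv : ContinuousOn (fun b => (M b).adjugate *ᵥ (β.equivFun (σ' b))) W := by
      rw [continuousOn_pi]
      intro k
      have hk : (fun b => ((M b).adjugate *ᵥ β.equivFun (σ' b)) k)
          = fun b => ∑ l, (M b).adjugate k l * β.equivFun (σ' b) l := by
        funext b
        simp [Matrix.mulVec, dotProduct]
      rw [hk]
      refine continuousOn_finset_sum _ fun l _ => ContinuousOn.mul ?_ ?_
      · exact ((continuousOn_pi.1 ((continuousOn_pi.1 hadj) k)) l)
      · exact (continuousOn_pi.1 hσ'W) l
    have hinv : ContinuousOn (fun b => ((M b).det)⁻¹) W :=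
      ((hdetcont.mono hWsub).inv₀ hdetW)
    exact hinv.smul hmv
  have hccont : ∀ i, ContinuousOn (c i) W := by
    intro i
    have h1 : Continuous (fun z : Fin n → ℝ => g (β.equivFun.symm z) i) := by
      have h0 : Continuous (g.comp (β.equivFun.symm : (Fin n → ℝ) →ₗ[ℝ] F)) :=
        LinearMap.continuous_of_finiteDimensional _
      exact (continuous_apply i).comp h0
    exact h1.comp_continuousOn hycont
  have hone : ∀ b ∈ W, σ' b = ∑ i, c i b • v i b := by
    intro b hb
    have hbd : (M b).det ≠ 0 := hdetW b hb
    have h1 : ∑ i, c i b • v i b = A b (β.equivFun.symm (y b)) := (hAapp _ _).symm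
    have h2 : (M b) *ᵥ (β.equivFun (β.equivFun.symm (y b))) =
        β.equivFun (A b (β.equivFun.symm (y b))) := hMmul b _
    rw [β.equivFun.apply_symm_apply (y b)] at h2
    have h8 : (M b) *ᵥ (y b) = β.equivFun (σ' b) := by
      rw [hy]
      dsimp only
      rw [Matrix.mulVec_smul, Matrix.mulVec_mulVec, Matrix.mul_adjugate,
        Matrix.smul_mulVec, Matrix.one_mulVec, smul_smul, inv_mul_cancel₀ hbd, one_smul]
    have h10 : A b (β.equivFun.symm (y b)) = σ' b := β.equivFun.injective (by rw [← h2, h8])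
    rw [h1, h10]
  refine ⟨W, hWopen, hxW, c, hccont, ?_⟩
  intro b hb
  have hbB : b ∈ e.baseSet := hWsub hb
  apply (e.continuousLinearEquivAt ℝ b hbB).injective
  rw [map_sum]
  simp only [_root_.map_smul]
  rw [keyσ b hbB]
  have hv' : ∀ i, (e.continuousLinearEquivAt ℝ b hbB) (s i b) = v i b := keyv b hbB
  simp only [hv']
  exact hone b hb

/-- Let `E` be a topological real vector bundle of finite rank over a compact Hausdorff
space `B`, and let `s₁, …, s_m` be continuous sections such that for every `b ∈ B` the
vectors `s₁(b), …, s_m(b)` span the fiber `E_b`.  Then every continuous section `σ` of `E`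
can be written as `σ = f₁ • s₁ + … + f_m • s_m` with `f₁, …, f_m ∈ C(B, ℝ)`. -/
theorem exists_continuousb_combination_of_spanning_sections
    {B : Type} [TopologicalSpace B] [CompactSpace B] [T2Space B]
    (F : Type) [NormedAddCommGroup F] [NormedSpace ℝ F] [FiniteDimensional ℝ F]
    (E : B → Type) [∀ b, AddCommGroup (E b)] [∀ b, Module ℝ (E b)]
    [∀ b, TopologicalSpace (E b)] [TopologicalSpace (TotalSpace F E)]
    [FiberBundle F E] [VectorBundle ℝ F E]
    (m : ℕ) (s : Fin m → ∀ b, E b)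
    (hscont : ∀ i, Continuous fun b => (TotalSpace.mk b (s i b) : TotalSpace F E))
    (hspan : ∀ b : B, Submodule.span ℝ (Set.range fun i => s i b) = ⊤)
    (σ : ∀ b, E b)
    (hσcont : Continuous fun b => (TotalSpace.mk b (σ b) : TotalSpace F E)) :
    ∃ f : Fin m → C(B, ℝ), ∀ b : B, σ b = ∑ i, (f i) b • s i b := by
  classical
  choose W hWopen hxW g hgcont hgeq using fun x : B =>
    local_coeffs_aux F E m s hscont σ hσcont x (hspan x)
  obtain ⟨ρ, hρ⟩ := PartitionOfUnity.exists_isSubordinate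
      (isClosed_univ : IsClosed (Set.univ : Set B)) W hWopen
      (fun b _ => Set.mem_iUnion.2 ⟨b, hxW b⟩)
  refine ⟨fun i => ⟨fun b => ∑ᶠ x, ρ x b • g x i b,
    hρ.continuous_finsum_smul hWopen (fun x => hgcont x i)⟩, ?_⟩
  intro b
  have hfin : {x : B | ρ x b ≠ 0}.Finite := by
    have := ρ.locallyFinite.point_finite b
    simpa [Function.mem_support] using this
  set T : Finset B := hfin.toFinset with hT
  have hsuppρ : (Function.support fun x : B => ρ x b) ⊆ ↑T := by
    intro z hz
    simp [hT, Set.Finite.mem_toFinset]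
    exact hz
  have hsumone : ∑ x ∈ T, ρ x b = 1 := by
    rw [← finsum_eq_sum_of_support_subset _ hsuppρ]
    exact ρ.sum_eq_one (Set.mem_univ b)
  have hsum : ∀ i, (∑ᶠ x, ρ x b • g x i b) = ∑ x ∈ T, ρ x b • g x i b := by
    intro i
    refine finsum_eq_sum_of_support_subset _ ?_
    intro z hz
    apply hsuppρ
    intro h0
    apply hz
    simp [Function.mem_support] at h0 ⊢
    simp [h0]
  simp only [ContinuousMap.coe_mk]
  calc σ b = (1 : ℝ) • σ b := (one_smul ℝ (σ b)).symm
    _ = (∑ x ∈ T, ρ x b) • σ b := by rw [hsumone]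
    _ = ∑ x ∈ T, ρ x b • σ b := Finset.sum_smul
    _ = ∑ x ∈ T, ρ x b • ∑ i, g x i b • s i b := by
        refine Finset.sum_congr rfl fun z _ => ?_
        rcases eq_or_ne (ρ z b) 0 with h | h
        · simp [h]
        · have hbW : b ∈ W z := hρ z (subset_tsupport _ h)
          rw [hgeq z b hbW]
    _ = ∑ x ∈ T, ∑ i, (ρ x b • g x i b) • s i b := by
        refine Finset.sum_congr rfl fun z _ => ?_
        rw [Finset.smul_sum]
        exact Finset.sum_congr rfl fun i _ => by rw [smul_smul]; rfl
    _ = ∑ i, ∑ x ∈ T, (ρ x b • g x i b) • s i b := Finset.sum_comm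
    _ = ∑ i, (∑ x ∈ T, ρ x b • g x i b) • s i b := by
        exact Finset.sum_congr rfl fun i _ => (Finset.sum_smul).symm
    _ = ∑ i, (∑ᶠ x, ρ x b • g x i b) • s i b := by
        exact Finset.sum_congr rfl fun i _ => by rw [hsum i]
end
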